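/- Let L be a k-assignment for a graph G and let f be a proportional L-coloring of G. Writing η(c) = k·q_c + r_c with 0 ≤ r_c ≤ k−1 for each color c in the palette 𝓛 = ⋃_v L(v), the number of colors c ∈ 𝓛 with r_c > 0 that are used exactly ⌈η(c)/k⌉ times by f equals (1/k)·Σ_{c∈𝓛} r_c. -/
import Mathlib


open Finset

/-- The multiplicity of a color `c` in a list assignment `L`: the number of
vertices whose list contains `c`. -/
def eta {V : Type*} [Fintype V] (L : V → Finset ℕ) (c : ℕ) : ℕ :=
  (Finset.univ.filter fun v => c ∈ L v).card

/-- `f` is a proportional `L`-coloring of `G` (with lists of size `k`): a proper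
`L`-coloring in which each color `c` of the palette is used `⌊η(c)/k⌋` or `⌈η(c)/k⌉` times. -/
def IsProportionalColoring {V : Type*} [Fintype V] (G : SimpleGraph V) (k : ℕ)
    (L : V → Finset ℕ) (f : V → ℕ) : Prop :=
  (∀ v, f v ∈ L v) ∧ (∀ u v, G.Adj u v → f u ≠ f v) ∧
  ∀ c, (∃ v, c ∈ L v) →
    (Finset.univ.filter fun v => f v = c).card = eta L c / k ∨
    (Finset.univ.filter fun v => f v = c).card = (eta L c + k - 1) / k

/-- `G` is proportionally `k`-choosable: every `k`-assignment admits a proportional coloring. -/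
def ProportionallyChoosable {V : Type*} [Fintype V] (G : SimpleGraph V) (k : ℕ) : Prop :=
  ∀ L : V → Finset ℕ, (∀ v, (L v).card = k) → ∃ f : V → ℕ, IsProportionalColoring G k L f

lemma ceil_div_eq (k n : ℕ) (hk : 0 < k) :
    (n + k - 1) / k = n / k + (if n % k = 0 then 0 else 1) := by
  have h1 : n = k * (n / k) + n % k := (Nat.div_add_mod n k).symm
  have h2 : n % k < k := Nat.mod_lt _ hk
  set q := n / k with hq
  set r := n % k with hr
  set m := k * q with hm
  by_cases h : r = 0
  · have : n + k - 1 = m + (k - 1) := by omega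
    rw [this, hm, Nat.mul_add_div hk, Nat.div_eq_of_lt (by omega)]
    simp [h]
  · have : n + k - 1 = k * (q + 1) + (r - 1) := by
      have : k * (q + 1) = m + k := by rw [hm]; ring
      omega
    rw [this, Nat.mul_add_div hk, Nat.div_eq_of_lt (by omega)]
    simp [h]

theorem stmt_2 {V : Type*} [Fintype V] (G : SimpleGraph V) (k : ℕ) (hk : 0 < k)
    (L : V → Finset ℕ) (hL : ∀ v, (L v).card = k) (f : V → ℕ)
    (hf : IsProportionalColoring G k L f) :
    k * (((Finset.univ.biUnion L).filter fun c =>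
            eta L c % k ≠ 0 ∧
            (Finset.univ.filter fun v => f v = c).card = (eta L c + k - 1) / k).card)
      = ∑ c ∈ Finset.univ.biUnion L, eta L c % k := by
  obtain ⟨hmem, -, hcount⟩ := hf
  set S := Finset.univ.biUnion L with hS
  set A := S.filter fun c => eta L c % k ≠ 0 ∧
      (Finset.univ.filter fun v => f v = c).card = (eta L c + k - 1) / k with hA
  -- sum of fiber counts = |V|
  have hV : ∑ c ∈ S, (Finset.univ.filter fun v => f v = c).card = Fintype.card V := by
    rw [← Finset.card_univ]
    exact (Finset.card_eq_sum_card_fiberwise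
      (fun v _ => Finset.mem_biUnion.mpr ⟨v, Finset.mem_univ v, hmem v⟩)).symm
  -- sum of eta = k * |V|
  have hEta : ∑ c ∈ S, eta L c = k * Fintype.card V := by
    have : ∀ c, eta L c = ∑ v : V, (if c ∈ L v then 1 else 0) := by
      intro c; rw [eta, Finset.card_filter]
    simp_rw [this]
    rw [Finset.sum_comm]
    have : ∀ v : V, ∑ c ∈ S, (if c ∈ L v then 1 else 0) = k := by
      intro v
      rw [← Finset.card_filter]
      have : S.filter (fun c => c ∈ L v) = L v := by
        ext c
        simp only [Finset.mem_filter, hS, Finset.mem_biUnion]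
        exact ⟨fun h => h.2, fun h => ⟨⟨v, Finset.mem_univ v, h⟩, h⟩⟩
      rw [this, hL]
    simp_rw [this]
    simp [Finset.card_univ, mul_comm]
  -- pointwise decomposition
  have hpoint : ∀ c ∈ S, (Finset.univ.filter fun v => f v = c).card
      = eta L c / k + (if c ∈ A then 1 else 0) := by
    intro c hc
    have hex : ∃ v, c ∈ L v := by
      rcases Finset.mem_biUnion.mp hc with ⟨v, -, hv⟩; exact ⟨v, hv⟩
    by_cases hcA : c ∈ A
    · obtain ⟨-, hr, hn⟩ := Finset.mem_filter.mp hcA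
      rw [hn, ceil_div_eq _ _ hk]
      simp [hcA, hr]
    · rcases hcount c hex with h | h
      · simp [hcA, h]
      · have hr : eta L c % k = 0 := by
          by_contra hr
          exact hcA (Finset.mem_filter.mpr ⟨hc, hr, h⟩)
        rw [h, ceil_div_eq _ _ hk]
        simp [hcA, hr]
  -- sum the decomposition
  have hsum : ∑ c ∈ S, (Finset.univ.filter fun v => f v = c).card
      = ∑ c ∈ S, eta L c / k + A.card := by
    rw [Finset.sum_congr rfl hpoint, Finset.sum_add_distrib]
    congr 1
    rw [Finset.sum_ite_mem]
    have : S ∩ A = A := Finset.inter_eq_right.mpr (Finset.filter_subset _ _)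
    rw [this, Finset.sum_const, smul_eq_mul, mul_one]
  -- sum η = k * Σ q + Σ r
  have hmod : ∑ c ∈ S, eta L c = k * ∑ c ∈ S, eta L c / k + ∑ c ∈ S, eta L c % k := by
    rw [Finset.mul_sum, ← Finset.sum_add_distrib]
    exact Finset.sum_congr rfl fun c _ => (Nat.div_add_mod _ _).symm
  have key : k * (∑ c ∈ S, eta L c / k + A.card)
      = k * ∑ c ∈ S, eta L c / k + ∑ c ∈ S, eta L c % k := by
    rw [← hmod, ← hsum, hV, hEta]
  rw [mul_add] at key
  exact Nat.add_left_cancel key
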